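/- Let k ≥ 1 and n > 2k be natural numbers, let d ≥ 2 be a natural number, and let u : Fin d → ℝ be a function with u_j > 0 for all j. Then (∑_{j=1}^{d} u_j) · (∑_{j=1}^{d} u_j^{(n+2k)/(n−2k)}) < (∑_{j=1}^{d} u_j)² · (∑_{j=1}^{d} u_j^{2n/(n−2k)})^{2k/n}, where all powers are real powers and the exponents are the indicated real ratios. -/

import Mathlib

open Finset Real

/-- The key strict inequality in the proof of the Aubin Lemma for the `Q`-curvature of
order `2k`: for `k ≥ 1`, `n > 2k`, `d ≥ 2`, and `u_j > 0`,
`(∑ u_j) * (∑ u_j ^ ((n+2k)/(n-2k))) < (∑ u_j)² * (∑ u_j ^ (2n/(n-2k))) ^ (2k/n)`,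
where all powers are real powers. -/
theorem sum_mul_sum_rpow_lt (k n d : ℕ) (hk : 1 ≤ k) (hn : 2 * k < n)
    (hd : 2 ≤ d) (u : Fin d → ℝ) (hu : ∀ j, 0 < u j) :
    (∑ j, u j) * (∑ j, u j ^ (((n : ℝ) + 2 * k) / ((n : ℝ) - 2 * k)))
      < (∑ j, u j) ^ 2 *
          (∑ j, u j ^ (2 * (n : ℝ) / ((n : ℝ) - 2 * k))) ^ (2 * (k : ℝ) / (n : ℝ)) := by
  have hk' : (0:ℝ) < 2 * k := by positivity
  have hnk : 2 * (k:ℝ) < (n:ℝ) := by exact_mod_cast hn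
  have hm : (0:ℝ) < (n:ℝ) - 2 * k := by linarith
  have hN : (0:ℝ) < (n:ℝ) := by linarith
  set S := ∑ j, u j with hSdef
  have hS : 0 < S := Finset.sum_pos (fun j _ => hu j) ⟨⟨0, by omega⟩, Finset.mem_univ _⟩
  set s : ℝ := (n:ℝ) / ((n:ℝ) - 2 * k) with hsdef
  have hs1 : 1 < s := by rw [hsdef, lt_div_iff₀ hm]; linarith
  -- Hölder
  have hconj : Real.HolderConjugate ((n:ℝ) / (2 * k)) s := by
    rw [Real.holderConjugate_iff]
    constructor
    · rw [lt_div_iff₀ hk']; linarith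
    · rw [hsdef]
      field_simp
      ring
  have holder := Real.inner_le_Lp_mul_Lq_of_nonneg (Finset.univ)
    hconj (f := fun j => u j ^ (4 * (k:ℝ) / ((n:ℝ) - 2 * k))) (g := u)
    (fun i _ => (Real.rpow_nonneg (hu i).le _)) (fun i _ => (hu i).le)
  have h1 : (∑ j, u j ^ (((n : ℝ) + 2 * k) / ((n : ℝ) - 2 * k)))
      ≤ (∑ j, u j ^ (2 * (n : ℝ) / ((n : ℝ) - 2 * k))) ^ (2 * (k : ℝ) / (n : ℝ)) *
        (∑ j, u j ^ s) ^ (1 / s) := by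
    have e1 : ∀ j, u j ^ (4 * (k:ℝ) / ((n:ℝ) - 2 * k)) * u j
        = u j ^ (((n : ℝ) + 2 * k) / ((n : ℝ) - 2 * k)) := by
      intro j
      nth_rewrite 2 [← Real.rpow_one (u j)]
      rw [← Real.rpow_add (hu j)]
      congr 1
      rw [div_add_one hm.ne']
      ring
    have e2 : ∀ j, (u j ^ (4 * (k:ℝ) / ((n:ℝ) - 2 * k))) ^ ((n:ℝ) / (2 * k))
        = u j ^ (2 * (n : ℝ) / ((n : ℝ) - 2 * k)) := by
      intro j
      rw [← Real.rpow_mul (hu j).le]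
      congr 1
      field_simp
      ring
    have e3 : 1 / ((n:ℝ) / (2 * k)) = 2 * (k:ℝ) / (n:ℝ) := by
      rw [one_div_div]
    calc (∑ j, u j ^ (((n : ℝ) + 2 * k) / ((n : ℝ) - 2 * k)))
        = ∑ j, u j ^ (4 * (k:ℝ) / ((n:ℝ) - 2 * k)) * u j := by
          exact Finset.sum_congr rfl fun j _ => (e1 j).symm
      _ ≤ (∑ j, (u j ^ (4 * (k:ℝ) / ((n:ℝ) - 2 * k))) ^ ((n:ℝ) / (2 * k))) ^ (1 / ((n:ℝ) / (2 * k)))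
          * (∑ j, u j ^ s) ^ (1 / s) := holder
      _ = (∑ j, u j ^ (2 * (n : ℝ) / ((n : ℝ) - 2 * k))) ^ (2 * (k : ℝ) / (n : ℝ)) *
          (∑ j, u j ^ s) ^ (1 / s) := by
          rw [e3]
          congr 2
          exact Finset.sum_congr rfl fun j _ => e2 j
  -- strict superadditivity
  have h2 : (∑ j, u j ^ s) < S ^ s := by
    haveI : Nontrivial (Fin d) := Fin.nontrivial_iff_two_le.mpr hd
    have key : ∀ j : Fin d, u j ^ s < u j * S ^ (s - 1) := by
      intro j
      obtain ⟨i, hi⟩ := exists_ne j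
      have hjS : u j < S := Finset.single_lt_sum hi (Finset.mem_univ j)
        (Finset.mem_univ i) (hu i) (fun k _ _ => (hu k).le)
      calc u j ^ s = u j * u j ^ (s - 1) := by
            nth_rewrite 2 [← Real.rpow_one (u j)]
            rw [← Real.rpow_add (hu j)]
            congr 1
            ring
        _ < u j * S ^ (s - 1) := by
            apply mul_lt_mul_of_pos_left _ (hu j)
            exact Real.rpow_lt_rpow (hu j).le hjS (by linarith)
    calc (∑ j, u j ^ s) < ∑ j, u j * S ^ (s - 1) :=
          Finset.sum_lt_sum_of_nonempty Finset.univ_nonempty fun j _ => key j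
      _ = S * S ^ (s - 1) := by rw [← Finset.sum_mul]
      _ = S ^ s := by
          nth_rewrite 1 [← Real.rpow_one S]
          rw [← Real.rpow_add hS]
          congr 1
          ring
  have h3 : (∑ j, u j ^ s) ^ (1 / s) < S := by
    have := Real.rpow_lt_rpow (Finset.sum_nonneg fun j _ => Real.rpow_nonneg (hu j).le _)
      h2 (by positivity : (0:ℝ) < 1 / s)
    rwa [← Real.rpow_mul hS.le, mul_one_div, div_self (by linarith), Real.rpow_one] at this
  set A := (∑ j, u j ^ (2 * (n : ℝ) / ((n : ℝ) - 2 * k))) ^ (2 * (k : ℝ) / (n : ℝ)) with hA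
  have hApos : 0 < A := by
    apply Real.rpow_pos_of_pos
    exact Finset.sum_pos (fun j _ => Real.rpow_pos_of_pos (hu j) _) ⟨⟨0, by omega⟩, Finset.mem_univ _⟩
  calc S * (∑ j, u j ^ (((n : ℝ) + 2 * k) / ((n : ℝ) - 2 * k)))
      ≤ S * (A * (∑ j, u j ^ s) ^ (1 / s)) := by
        exact mul_le_mul_of_nonneg_left h1 hS.le
    _ < S * (A * S) := by
        exact mul_lt_mul_of_pos_left (mul_lt_mul_of_pos_left h3 hApos) hS
    _ = S ^ 2 * A := by ring
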